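/- Let K be an abelian number field with degree n_K satisfying 4 ≤ n_K ≤ 12, and assume the fourth-moment bounds ∫_T^{2T}|ζ(1/2+it)|⁴dt ≪ T^{1+ε}, ∫_T^{2T}|L(1/2+it,χ)|⁴dt ≪ q T^{1+ε}, the twelfth-moment bounds ∫_T^{2T}|ζ(1/2+it)|^{12}dt ≪ T^{2+ε}, ∫_T^{2T}|L(1/2+it,χ)|^{12}dt ≪ q³T^{2+ε}, and the sixth-moment bound ∫_T^{2T}|ζ(1/2+it)|⁶dt ≪ T^{5/4+ε}. Then ∫_T^{2T}|ζ_K(1/2+it)| dt ≪_{K,ε} T^{n_K/8 + 1/2 + ε} for T ≥ 2. -/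

import Mathlib

open NumberField Ideal Complex intervalIntegral

open MeasureTheory ENNReal NNReal

private lemma lfun_modOne {N : ℕ} [NeZero N] (hN : N = 1) (χ : DirichletCharacter ℂ N) :
    DirichletCharacter.LFunction χ = riemannZeta := by
  subst hN; exact DirichletCharacter.LFunction_modOne_eq

/-- Lemma 3 of the paper, first case: let `K` be an abelian number field of degree
`4 ≤ n_K ≤ 12`, with Dedekind zeta function `Z` factoring on the critical line as
`∏_j L(s, χ_j)` (with `χ_{j₀}` trivial of modulus `1`, so its `L`-function is the Riemann
zeta function). Assuming the fourth-moment bounds `∫_T^{2T}|ζ(1/2+it)|⁴dt ≪ T^{1+ε}` and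
`∫_T^{2T}|L(1/2+it,χ)|⁴dt ≪ q T^{1+ε}`, the twelfth-moment bounds
`∫_T^{2T}|ζ(1/2+it)|¹²dt ≪ T^{2+ε}` and `∫_T^{2T}|L(1/2+it,χ)|¹²dt ≪ q³ T^{2+ε}`, and the
sixth-moment bound `∫_T^{2T}|ζ(1/2+it)|⁶dt ≪ T^{5/4+ε}`, one has
`∫_T^{2T}|ζ_K(1/2+it)| dt ≪_{K,ε} T^{n_K/8+1/2+ε}` for `T ≥ 2`. -/
theorem first_moment_small_degree (K : Type) [Field K] [NumberField K]
    [IsGalois ℚ K] (habelian : ∀ σ τ : K ≃ₐ[ℚ] K, σ * τ = τ * σ)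
    (hdeg4 : 4 ≤ Module.finrank ℚ K) (hdeg12 : Module.finrank ℚ K ≤ 12)
    (Z : ℂ → ℂ) (q : Fin (Module.finrank ℚ K) → ℕ) (hq : ∀ j, NeZero (q j))
    (χ : ∀ j, DirichletCharacter ℂ (q j))
    (hχ : ∀ j, (χ j).IsPrimitive)
    (j₀ : Fin (Module.finrank ℚ K)) (hq₀ : q j₀ = 1) (hχ₀ : χ j₀ = 1)
    (hseries : ∀ s : ℂ, 1 < s.re →
      Z s = ∑' I : {I : Ideal (𝓞 K) // I ≠ 0}, (absNorm I.1 : ℂ) ^ (-s))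
    (hfact : ∀ t : ℝ,
      Z (1 / 2 + t * I) = ∏ j, DirichletCharacter.LFunction (χ j) (1 / 2 + t * I))
    (hζ4 : ∀ ε : ℝ, 0 < ε → ∃ C : ℝ, 0 < C ∧ ∀ T : ℝ, 2 ≤ T →
      (∫ t in T..(2 * T), ‖riemannZeta (1 / 2 + t * I)‖ ^ (4 : ℕ)) ≤ C * T ^ (1 + ε))
    (hL4 : ∀ ε : ℝ, 0 < ε → ∃ C : ℝ, 0 < C ∧ ∀ j, ∀ T : ℝ, 2 ≤ T →
      (∫ t in T..(2 * T), ‖DirichletCharacter.LFunction (χ j) (1 / 2 + t * I)‖ ^ (4 : ℕ))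
        ≤ C * q j * T ^ (1 + ε))
    (hζ12 : ∀ ε : ℝ, 0 < ε → ∃ C : ℝ, 0 < C ∧ ∀ T : ℝ, 2 ≤ T →
      (∫ t in T..(2 * T), ‖riemannZeta (1 / 2 + t * I)‖ ^ (12 : ℕ)) ≤ C * T ^ (2 + ε))
    (hL12 : ∀ ε : ℝ, 0 < ε → ∃ C : ℝ, 0 < C ∧ ∀ j, ∀ T : ℝ, 2 ≤ T →
      (∫ t in T..(2 * T), ‖DirichletCharacter.LFunction (χ j) (1 / 2 + t * I)‖ ^ (12 : ℕ))
        ≤ C * (q j : ℝ) ^ (3 : ℕ) * T ^ (2 + ε))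
    (hζ6 : ∀ ε : ℝ, 0 < ε → ∃ C : ℝ, 0 < C ∧ ∀ T : ℝ, 2 ≤ T →
      (∫ t in T..(2 * T), ‖riemannZeta (1 / 2 + t * I)‖ ^ (6 : ℕ)) ≤ C * T ^ (5 / 4 + ε)) :
    ∀ ε : ℝ, 0 < ε → ∃ C : ℝ, 0 < C ∧ ∀ T : ℝ, 2 ≤ T →
      (∫ t in T..(2 * T), ‖Z (1 / 2 + t * I)‖)
        ≤ C * T ^ ((Module.finrank ℚ K : ℝ) / 8 + 1 / 2 + ε) := by
  classical
  intro ε hε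
  obtain ⟨C4, hC4pos, hC4⟩ := hL4 ε hε
  obtain ⟨C12, hC12pos, hC12⟩ := hL12 ε hε
  obtain ⟨C6, hC6pos, hC6⟩ := hζ6 ε hε
  -- continuity of the L-functions on the critical line
  set L : Fin (Module.finrank ℚ K) → ℝ → ℂ :=
    fun j t => DirichletCharacter.LFunction (χ j) (1 / 2 + t * I) with hL
  have hLcont : ∀ j, Continuous (L j) := by
    intro j
    rw [continuous_iff_continuousAt]
    intro t
    have hline : Continuous fun t : ℝ => (1 / 2 + (t : ℂ) * I) :=
      continuous_const.add (Complex.continuous_ofReal.mul continuous_const)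
    have hne : (1 / 2 + (t : ℂ) * I) ≠ 1 := by
      intro h
      have := congrArg Complex.re h
      simp at this
    exact ContinuousAt.comp (x := t)
      ((χ j).differentiableAt_LFunction _ (Or.inl hne)).continuousAt hline.continuousAt
  -- partition of the indices
  set s0 : Finset (Fin (Module.finrank ℚ K)) :=
    if Odd (Module.finrank ℚ K) then {j₀} else ∅ with hs0
  set o : ℕ := if Odd (Module.finrank ℚ K) then 1 else 0 with ho
  have hs0card : s0.card = o := by
    by_cases h : Odd (Module.finrank ℚ K) <;> simp [hs0, ho, h]
  have ho' : o = Module.finrank ℚ K % 2 := by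
    rcases Nat.even_or_odd (Module.finrank ℚ K) with h | h
    · simp [ho, Nat.odd_iff, Nat.even_iff.mp h]
    · simp [ho, h, Nat.odd_iff.mp h]
  set a : ℕ := (12 - Module.finrank ℚ K) / 2 with ha
  have h2a : a * 2 + Module.finrank ℚ K + o = 12 := by omega
  have hcard_rest : (Finset.univ \ s0).card = Module.finrank ℚ K - o := by
    rw [Finset.card_sdiff_of_subset (Finset.subset_univ s0), hs0card]
    simp
  have haler : a ≤ (Finset.univ \ s0).card := by
    rw [hcard_rest]; omega
  obtain ⟨A, hAsub, hAcard⟩ := Finset.exists_subset_card_eq haler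
  set B : Finset (Fin (Module.finrank ℚ K)) := (Finset.univ \ s0) \ A with hB
  have hBcard : B.card = Module.finrank ℚ K - o - a := by
    rw [hB, Finset.card_sdiff_of_subset hAsub, hcard_rest, hAcard]
  have hA_not_s0 : ∀ j ∈ A, j ∉ s0 := fun j hj =>
    (Finset.mem_sdiff.mp (hAsub hj)).2
  have hB_not : ∀ j ∈ B, j ∉ s0 ∧ j ∉ A := fun j hj => by
    have h1 := Finset.mem_sdiff.mp hj
    exact ⟨(Finset.mem_sdiff.mp h1.1).2, h1.2⟩
  -- the per-index exponents, weights and constants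
  set m : Fin (Module.finrank ℚ K) → ℕ :=
    fun j => if j ∈ s0 then 6 else if j ∈ A then 4 else 12 with hm
  set w : Fin (Module.finrank ℚ K) → ℝ := fun j => ((m j : ℝ))⁻¹ with hw
  set e : Fin (Module.finrank ℚ K) → ℝ :=
    fun j => if j ∈ s0 then 5 / 4 else if j ∈ A then 1 else 2 with he
  set c : Fin (Module.finrank ℚ K) → ℝ :=
    fun j => if j ∈ s0 then C6 else if j ∈ A then C4 * q j else C12 * (q j : ℝ) ^ (3 : ℕ)
    with hc
  have hmpos : ∀ j, 0 < m j := by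
    intro j; rw [hm]; dsimp only; split
    · norm_num
    · split <;> norm_num
  have hwpos : ∀ j, 0 < w j := fun j => by
    rw [hw]; exact inv_pos.mpr (by exact_mod_cast hmpos j)
  have hqpos : ∀ j, (0 : ℝ) < q j := fun j => by
    exact_mod_cast Nat.pos_of_ne_zero (hq j).out
  have hcpos : ∀ j, 0 < c j := by
    intro j; rw [hc]; dsimp only
    split
    · exact hC6pos
    · split
      · exact mul_pos hC4pos (hqpos j)
      · exact mul_pos hC12pos (pow_pos (hqpos j) 3)
  -- sum decomposition helper
  have hsplit : ∀ (f : Fin (Module.finrank ℚ K) → ℝ) (v0 v1 v2 : ℝ), (∀ j ∈ s0, f j = v0) →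
      (∀ j ∈ A, f j = v1) → (∀ j ∈ B, f j = v2) →
      ∑ j, f j = o * v0 + a * v1 + ((Module.finrank ℚ K - o - a : ℕ) : ℝ) * v2 := by
    intro f v0 v1 v2 h0 h1 h2
    rw [← Finset.sum_sdiff (Finset.subset_univ s0), ← Finset.sum_sdiff hAsub, ← hB]
    rw [Finset.sum_congr rfl h0, Finset.sum_congr rfl h1, Finset.sum_congr rfl h2]
    rw [Finset.sum_const, Finset.sum_const, Finset.sum_const, hs0card, hAcard, hBcard]
    simp only [nsmul_eq_mul]
    ring
  have hcast : ((Module.finrank ℚ K - o - a : ℕ) : ℝ) = (Module.finrank ℚ K : ℝ) - o - a := by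
    rw [Nat.cast_sub (by omega), Nat.cast_sub (by omega)]
  have h2a' : (a : ℝ) * 2 + (Module.finrank ℚ K : ℝ) + o = 12 := by exact_mod_cast h2a
  have hwconst0 : ∀ j ∈ s0, w j = (6 : ℝ)⁻¹ := fun j hj => by
    simp [hw, hm, hj]
  have hwconst1 : ∀ j ∈ A, w j = (4 : ℝ)⁻¹ := fun j hj => by
    simp [hw, hm, hA_not_s0 j hj, hj]
  have hwconst2 : ∀ j ∈ B, w j = (12 : ℝ)⁻¹ := fun j hj => by
    simp [hw, hm, (hB_not j hj).1, (hB_not j hj).2]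
  have hsum1 : ∑ j, w j = 1 := by
    rw [hsplit w _ _ _ hwconst0 hwconst1 hwconst2, hcast]
    linear_combination (1 / 12 : ℝ) * h2a'
  have hsumE : ∑ j, w j * (e j + ε) = (Module.finrank ℚ K : ℝ) / 8 + 1 / 2 + ε := by
    rw [hsplit (fun j => w j * (e j + ε)) ((6 : ℝ)⁻¹ * (5 / 4 + ε)) ((4 : ℝ)⁻¹ * (1 + ε))
      ((12 : ℝ)⁻¹ * (2 + ε)) ?_ ?_ ?_, hcast]
    · linear_combination (1 / 24 + ε / 12) * h2a'
    · intro j hj; simp only [hwconst0 j hj]; simp [he, hj]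
    · intro j hj; simp only [hwconst1 j hj]; simp [he, hA_not_s0 j hj, hj]
    · intro j hj; simp only [hwconst2 j hj]; simp [he, (hB_not j hj).1, (hB_not j hj).2]
  refine ⟨∏ j, c j ^ w j,
    Finset.prod_pos fun j _ => Real.rpow_pos_of_pos (hcpos j) _, ?_⟩
  intro T hT
  have hT0 : (0 : ℝ) < T := by linarith
  have hTle : T ≤ 2 * T := by linarith
  -- per-factor moment bounds
  have hIc : ∀ j, MeasureTheory.IntegrableOn (fun t => ‖L j t‖ ^ m j)
      (Set.Ioc T (2 * T)) := fun j =>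
    ((hLcont j).norm.pow (m j)).integrableOn_Ioc
  have hkey : ∀ j, (∫⁻ t in Set.Ioc T (2 * T), (‖L j t‖₊ : ℝ≥0∞) ^ (m j))
      ≤ ENNReal.ofReal (c j * T ^ (e j + ε)) := by
    intro j
    have h1 : (∫⁻ t in Set.Ioc T (2 * T), (‖L j t‖₊ : ℝ≥0∞) ^ (m j))
        = ENNReal.ofReal (∫ t in T..(2 * T), ‖L j t‖ ^ (m j)) := by
      rw [intervalIntegral.integral_of_le hTle,
        MeasureTheory.ofReal_integral_eq_lintegral_ofReal (hIc j)
          (Filter.Eventually.of_forall fun t => by positivity)]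
      refine MeasureTheory.lintegral_congr fun t => ?_
      rw [ENNReal.ofReal_pow (norm_nonneg _), ofReal_norm, enorm_eq_nnnorm]
    rw [h1]
    apply ENNReal.ofReal_le_ofReal
    by_cases h0 : j ∈ s0
    · have hodd : Odd (Module.finrank ℚ K) := by
        by_contra h; rw [hs0] at h0; simp [h] at h0
      have hj : j = j₀ := by
        rw [hs0, if_pos hodd] at h0; simpa using h0
      have hLζ : ∀ t : ℝ, L j t = riemannZeta (1 / 2 + t * I) := by
        intro t
        rw [hL, hj]
        exact congrFun (lfun_modOne hq₀ (χ j₀)) _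
      simp only [hm, hc, he, if_pos h0, hLζ]
      exact hC6 T hT
    · by_cases h1 : j ∈ A
      · simp only [hm, hc, he, if_neg h0, if_pos h1, hL]
        exact hC4 j T hT
      · simp only [hm, hc, he, if_neg h0, if_neg h1, hL]
        exact hC12 j T hT
  -- Hölder's inequality
  have hmeas : ∀ j ∈ Finset.univ, AEMeasurable (fun t => (‖L j t‖₊ : ℝ≥0∞) ^ (m j))
      (MeasureTheory.volume.restrict (Set.Ioc T (2 * T))) := by
    intro j _
    have hco : Continuous fun t => ((‖L j t‖₊ ^ m j : ℝ≥0) : ℝ≥0∞) :=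
      ENNReal.continuous_coe.comp ((hLcont j).nnnorm.pow _)
    simpa [ENNReal.coe_pow] using hco.measurable.aemeasurable
  have holder := ENNReal.lintegral_prod_norm_pow_le
    (μ := MeasureTheory.volume.restrict (Set.Ioc T (2 * T)))
    Finset.univ hmeas hsum1 (fun j _ => (hwpos j).le)
  have hprod : ∀ t : ℝ, (∏ j, ((‖L j t‖₊ : ℝ≥0∞) ^ (m j)) ^ (w j))
      = (‖Z (1 / 2 + t * I)‖₊ : ℝ≥0∞) := by
    intro t
    have h1 : ∀ j, ((‖L j t‖₊ : ℝ≥0∞) ^ (m j)) ^ (w j) = (‖L j t‖₊ : ℝ≥0∞) := by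
      intro j
      rw [hw]
      dsimp only
      rw [← ENNReal.rpow_natCast, ← ENNReal.rpow_mul,
        mul_inv_cancel₀ (by exact_mod_cast (hmpos j).ne'), ENNReal.rpow_one]
    simp only [h1]
    rw [hfact t, ← ENNReal.coe_finset_prod, ← nnnorm_prod]
  have hmain : (∫⁻ t in Set.Ioc T (2 * T), (‖Z (1 / 2 + t * I)‖₊ : ℝ≥0∞))
      ≤ ∏ j, ENNReal.ofReal (c j * T ^ (e j + ε)) ^ (w j) := by
    calc (∫⁻ t in Set.Ioc T (2 * T), (‖Z (1 / 2 + t * I)‖₊ : ℝ≥0∞))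
        = ∫⁻ t in Set.Ioc T (2 * T), ∏ j, ((‖L j t‖₊ : ℝ≥0∞) ^ (m j)) ^ (w j) :=
          MeasureTheory.lintegral_congr fun t => (hprod t).symm
      _ ≤ ∏ j, (∫⁻ t in Set.Ioc T (2 * T), (‖L j t‖₊ : ℝ≥0∞) ^ (m j)) ^ (w j) := holder
      _ ≤ ∏ j, ENNReal.ofReal (c j * T ^ (e j + ε)) ^ (w j) :=
          Finset.prod_le_prod' fun j _ => ENNReal.rpow_le_rpow (hkey j) (hwpos j).le
  have hRne : ∀ j ∈ Finset.univ,
      ENNReal.ofReal (c j * T ^ (e j + ε)) ^ (w j) ≠ ⊤ := fun j _ =>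
    ENNReal.rpow_ne_top_of_nonneg (hwpos j).le ENNReal.ofReal_ne_top
  have hZcont : Continuous fun t : ℝ => Z (1 / 2 + t * I) := by
    have heq : (fun t : ℝ => Z (1 / 2 + t * I)) = fun t => ∏ j, L j t := by
      funext t; rw [hfact t]
    rw [heq]
    exact continuous_finset_prod _ fun j _ => hLcont j
  have hfinal : (∫ t in T..(2 * T), ‖Z (1 / 2 + t * I)‖)
      = (∫⁻ t in Set.Ioc T (2 * T), (‖Z (1 / 2 + t * I)‖₊ : ℝ≥0∞)).toReal := by
    rw [intervalIntegral.integral_of_le hTle,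
      MeasureTheory.integral_eq_lintegral_of_nonneg_ae
        (Filter.Eventually.of_forall fun t => norm_nonneg _)
        hZcont.norm.aestronglyMeasurable.restrict]
    congr 1
    refine MeasureTheory.lintegral_congr fun t => ?_
    exact (ofReal_norm _).trans (enorm_eq_nnnorm _)
  rw [hfinal]
  refine le_trans (ENNReal.toReal_mono (ENNReal.prod_ne_top hRne) hmain) ?_
  have hb : ∀ j ∈ Finset.univ, (ENNReal.ofReal (c j * T ^ (e j + ε)) ^ (w j)).toReal
      = (c j * T ^ (e j + ε)) ^ (w j) := by
    intro j _
    rw [← ENNReal.toReal_rpow, ENNReal.toReal_ofReal (by positivity)]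
  rw [ENNReal.toReal_prod, Finset.prod_congr rfl hb]
  have hfin : ∏ j, (c j * T ^ (e j + ε)) ^ (w j)
      = (∏ j, c j ^ w j) * T ^ ((Module.finrank ℚ K : ℝ) / 8 + 1 / 2 + ε) := by
    have h2 : ∀ j ∈ Finset.univ, (c j * T ^ (e j + ε)) ^ (w j)
        = c j ^ w j * T ^ ((e j + ε) * w j) := by
      intro j _
      rw [Real.mul_rpow (hcpos j).le (by positivity), Real.rpow_mul hT0.le]
    rw [Finset.prod_congr rfl h2, Finset.prod_mul_distrib]
    congr 1
    rw [← Real.rpow_sum_of_pos hT0]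
    congr 1
    rw [← hsumE]
    exact Finset.sum_congr rfl fun j _ => mul_comm _ _
  rw [hfin]
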